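/- The linear system γ₁ + γ₂ + ... + γₛ = 1/2 and γ₁ + 2^{-2k}γ₂ + ... + s^{-2k}γₛ = 0 for 1 ≤ k ≤ n-1, with s = n unknowns, has a unique solution (γ₁, ..., γₙ), and in this solution every γₘ is nonzero. -/

import Mathlib

open Matrix Finset

/-- The linear system `γ₁ + ⋯ + γₛ = 1/2` and `γ₁ + 2^{-2k}γ₂ + ⋯ + s^{-2k}γₛ = 0`
for `1 ≤ k ≤ n-1`, with `s = n` unknowns, has a unique solution, and every
coordinate of this solution is nonzero. -/
theorem stmt_0 (n : ℕ) (hn : 1 ≤ n) :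
    (∃! γ : Fin n → ℝ,
      (∑ m : Fin n, γ m = 1 / 2) ∧
      (∀ k : ℕ, 1 ≤ k → k ≤ n - 1 →
        ∑ m : Fin n, ((m : ℝ) + 1) ^ (-(2 * k : ℤ)) * γ m = 0)) ∧
    (∀ γ : Fin n → ℝ,
      ((∑ m : Fin n, γ m = 1 / 2) ∧
       (∀ k : ℕ, 1 ≤ k → k ≤ n - 1 →
         ∑ m : Fin n, ((m : ℝ) + 1) ^ (-(2 * k : ℤ)) * γ m = 0)) →
      ∀ m : Fin n, γ m ≠ 0) := by
  obtain ⟨k, rfl⟩ : ∃ k, n = k + 1 := ⟨n - 1, (Nat.succ_pred_eq_of_pos hn).symm⟩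
  set x : Fin (k + 1) → ℝ := fun j => (((j : ℝ) + 1) ^ 2)⁻¹ with hxdef
  have hxpos : ∀ j, 0 < x j := fun j => by positivity
  have hxinj : Function.Injective x := by
    intro j j' h
    have h2 : ((j : ℝ) + 1) ^ 2 = ((j' : ℝ) + 1) ^ 2 := inv_injective h
    have h3 : ((j : ℝ) - (j' : ℝ)) * ((j : ℝ) + (j' : ℝ) + 2) = 0 := by
      linear_combination h2
    have hj : (0 : ℝ) ≤ (j : ℝ) := by positivity
    have hj' : (0 : ℝ) ≤ (j' : ℝ) := by positivity
    have h4 : (j : ℝ) = (j' : ℝ) := by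
      rcases mul_eq_zero.mp h3 with h' | h'
      · linarith
      · linarith
    have : (j : ℕ) = (j' : ℕ) := by exact_mod_cast h4
    exact Fin.ext this
  have hpow : ∀ (j : Fin (k + 1)) (c : ℕ),
      ((j : ℝ) + 1) ^ (-(2 * (c : ℤ))) = x j ^ c := by
    intro j c
    rw [show (-(2 * (c : ℤ))) = (-2) * (c : ℤ) by ring, _root_.zpow_mul, zpow_natCast]
    norm_num [_root_.zpow_neg, hxdef]
  set M : Matrix (Fin (k + 1)) (Fin (k + 1)) ℝ := (Matrix.vandermonde x)ᵀ with hMdef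
  set b : Fin (k + 1) → ℝ := fun i => if i = 0 then 1 / 2 else 0 with hbdef
  have hEquiv : ∀ γ : Fin (k + 1) → ℝ,
      ((∑ m : Fin (k + 1), γ m = 1 / 2) ∧
       (∀ k' : ℕ, 1 ≤ k' → k' ≤ k + 1 - 1 →
         ∑ m : Fin (k + 1), ((m : ℝ) + 1) ^ (-(2 * k' : ℤ)) * γ m = 0)) ↔
      M.mulVec γ = b := by
    intro γ
    constructor
    · rintro ⟨h1, h2⟩
      funext i
      simp only [hMdef, Matrix.mulVec, dotProduct, Matrix.transpose_apply,
        Matrix.vandermonde, Matrix.of_apply, hbdef]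
      by_cases hi : i = 0
      · subst hi; simpa using h1
      · have hi1 : 1 ≤ (i : ℕ) := by
          have : (i : ℕ) ≠ 0 := fun h => hi (Fin.ext h)
          omega
        have hi2 : (i : ℕ) ≤ k := by omega
        have := h2 (i : ℕ) hi1 (by omega)
        rw [if_neg hi]
        rw [← this]
        exact Finset.sum_congr rfl fun j _ => by rw [hpow]
    · intro h
      constructor
      · have := congrFun h 0
        simp only [hMdef, Matrix.mulVec, dotProduct, Matrix.transpose_apply,
          Matrix.vandermonde, Matrix.of_apply, hbdef, if_pos rfl] at this
        simpa using this
      · intro k' hk1 hk2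
        have hlt : k' < k + 1 := by omega
        have := congrFun h ⟨k', hlt⟩
        simp only [hMdef, Matrix.mulVec, dotProduct, Matrix.transpose_apply,
          Matrix.vandermonde, Matrix.of_apply, hbdef] at this
        rw [if_neg (by simp [Fin.ext_iff]; omega)] at this
        rw [← this]
        exact Finset.sum_congr rfl fun j _ => by rw [hpow]
  have hdetM : M.det ≠ 0 := by
    rw [hMdef, Matrix.det_transpose, Matrix.det_vandermonde_ne_zero_iff]
    exact hxinj
  constructor
  · -- existence and uniqueness
    have hMunit : IsUnit M.det := isUnit_iff_ne_zero.mpr hdetM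
    refine ⟨M⁻¹.mulVec b, (hEquiv _).mpr ?_, fun γ hγ => ?_⟩
    · rw [Matrix.mulVec_mulVec, Matrix.mul_nonsing_inv M hMunit, Matrix.one_mulVec]
    · have h1 := (hEquiv γ).mp hγ
      have : M⁻¹.mulVec (M.mulVec γ) = M⁻¹.mulVec b := by rw [h1]
      rwa [Matrix.mulVec_mulVec, Matrix.nonsing_inv_mul M hMunit, Matrix.one_mulVec] at this
  · -- every coordinate nonzero
    intro γ hγ m hm
    set η : Fin (k + 1) → ℝ := fun j => x j * γ j with hηdef
    set V : Matrix (Fin (k + 1)) (Fin (k + 1)) ℝ :=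
      fun i j => if i = Fin.last k then (if j = m then (1 : ℝ) else 0) else x j ^ (i : ℕ)
      with hVdef
    have hVη : V.mulVec η = 0 := by
      funext i
      simp only [Matrix.mulVec, dotProduct, Pi.zero_apply, hVdef]
      by_cases hi : i = Fin.last k
      · subst hi
        simp [hηdef, hm]
      · rw [Finset.sum_congr rfl (fun j _ => by rw [if_neg hi])]
        have hlt : (i : ℕ) < k := by
          have h1 := i.isLt
          have h2 : (i : ℕ) ≠ k := fun h => hi (Fin.ext (by simp [h]))
          omega
        have h2 := hγ.2 ((i : ℕ) + 1) (by omega) (by omega)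
        rw [← h2]
        refine Finset.sum_congr rfl fun j _ => ?_
        rw [hpow, pow_succ, hηdef]
        ring
    have hdetV : V.det ≠ 0 := by
      rw [Matrix.det_succ_row V (Fin.last k)]
      rw [Finset.sum_eq_single m]
      · have hsub : V.submatrix (Fin.last k).succAbove m.succAbove
            = (Matrix.vandermonde (x ∘ m.succAbove))ᵀ := by
          funext i j
          simp only [Matrix.submatrix_apply, hVdef, Fin.succAbove_last,
            Matrix.transpose_apply, Matrix.vandermonde, Matrix.of_apply, Function.comp]
          show (if Fin.castSucc i = Fin.last k then (if m.succAbove j = m then (1 : ℝ) else 0)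
            else x (m.succAbove j) ^ ((Fin.castSucc i : Fin (k + 1)) : ℕ)) = _
          rw [if_neg (Fin.castSucc_lt_last i).ne]
          simp
        rw [hsub, Matrix.det_transpose]
        have hinj : Function.Injective (x ∘ m.succAbove) :=
          hxinj.comp (Fin.succAbove_right_injective)
        have hv : (Matrix.vandermonde (x ∘ m.succAbove)).det ≠ 0 :=
          Matrix.det_vandermonde_ne_zero_iff.mpr hinj
        have hV1 : V (Fin.last k) m = 1 := by simp [hVdef]
        rw [hV1]
        intro hcon
        rcases mul_eq_zero.mp hcon with h' | h'
        · rcases mul_eq_zero.mp h' with h'' | h''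
          · exact (pow_ne_zero _ (by norm_num : (-1 : ℝ) ≠ 0)) h''
          · exact one_ne_zero h''
        · exact hv h'
      · intro j _ hj
        have : V (Fin.last k) j = 0 := by simp [hVdef, hj]
        rw [this]; ring
      · intro h
        exact absurd (Finset.mem_univ m) h
    have hη0 : η = 0 := Matrix.eq_zero_of_mulVec_eq_zero hdetV hVη
    have hγ0 : ∀ j, γ j = 0 := by
      intro j
      have h1 := congrFun hη0 j
      simp only [hηdef, Pi.zero_apply] at h1
      rcases mul_eq_zero.mp h1 with h' | h'
      · exact absurd h' (hxpos j).ne'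
      · exact h'
    have := hγ.1
    rw [Finset.sum_congr rfl (fun j _ => hγ0 j)] at this
    simp at this
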